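/- Every torsionfree group that contains a cyclic subgroup of finite index is either trivial or infinite cyclic. Equivalently, a torsionfree virtually cyclic group is trivial or isomorphic to ℤ. -/

import Mathlib

/-- A monoid is torsion-free if no nontrivial elements have finite order
(the definition `Monoid.IsTorsionFree` of the older Mathlib). -/
def Monoid.IsTorsionFree (G : Type*) [Monoid G] : Prop :=
  ∀ g : G, g ≠ 1 → ¬IsOfFinOrder g

open Subgroup Function
open scoped commutatorElement

section Aux

variable {G : Type*} [Group G]

private lemma conj_central_left {z : G} (hz : ∀ g : G, g * z = z * g) (a b : G) :
    ⁅a * z, b⁆ = ⁅a, b⁆ := by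
  have h1 : z * b * z⁻¹ = b := by rw [← hz b]; group
  calc ⁅a * z, b⁆ = a * (z * b * z⁻¹) * a⁻¹ * b⁻¹ := by
        rw [commutatorElement_def]; group
    _ = a * b * a⁻¹ * b⁻¹ := by rw [h1]
    _ = ⁅a, b⁆ := (commutatorElement_def a b).symm

private lemma conj_central_right {z : G} (hz : ∀ g : G, g * z = z * g) (a b : G) :
    ⁅a, b * z⁆ = ⁅a, b⁆ := by
  have h1 : z * a⁻¹ * z⁻¹ = a⁻¹ := by rw [← hz a⁻¹]; group
  calc ⁅a, b * z⁆ = a * b * (z * a⁻¹ * z⁻¹) * b⁻¹ := by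
        rw [commutatorElement_def]; group
    _ = a * b * a⁻¹ * b⁻¹ := by rw [h1]
    _ = ⁅a, b⁆ := (commutatorElement_def a b).symm

private lemma finite_commutatorSet_aux [(Subgroup.center G).FiniteIndex] :
    Finite (commutatorSet G) := by
  have hsub : commutatorSet G ⊆
      Set.range (fun p : (G ⧸ center G) × (G ⧸ center G) =>
        ⁅(p.1.out : G), (p.2.out : G)⁆) := by
    rintro x ⟨a, b, rfl⟩
    refine ⟨(QuotientGroup.mk a, QuotientGroup.mk b), ?_⟩
    obtain ⟨z, hz⟩ := QuotientGroup.mk_out_eq_mul (center G) a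
    obtain ⟨w, hw⟩ := QuotientGroup.mk_out_eq_mul (center G) b
    have hzc : ∀ g : G, g * (z : G) = (z : G) * g := fun g =>
      (Subgroup.mem_center_iff.mp z.2 g)
    have hwc : ∀ g : G, g * (w : G) = (w : G) * g := fun g =>
      (Subgroup.mem_center_iff.mp w.2 g)
    show ⁅((QuotientGroup.mk a : G ⧸ center G).out : G),
        ((QuotientGroup.mk b : G ⧸ center G).out : G)⁆ = ⁅a, b⁆
    rw [hz, hw, conj_central_left hzc, conj_central_right hwc]
  exact Set.Finite.to_subtype (Set.Finite.subset (Set.finite_range _) hsub)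

/-- A finite subgroup of a torsionfree group is trivial; applied to the commutator
subgroup, which is finite by Schur's theorem when the center has finite index. -/
private lemma comm_of_central (htf : Monoid.IsTorsionFree G) (N : Subgroup G)
    (hc : N ≤ center G) [N.FiniteIndex] : ∀ x y : G, x * y = y * x := by
  haveI : (center G).FiniteIndex := Subgroup.finiteIndex_of_le hc
  haveI : Finite (commutatorSet G) := finite_commutatorSet_aux
  haveI : Finite (_root_.commutator G) := inferInstance
  intro x y
  rw [← commutatorElement_eq_one_iff_mul_comm]
  have hmem : ⁅x, y⁆ ∈ _root_.commutator G := by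
    rw [_root_.commutator_def]
    exact Subgroup.commutator_mem_commutator (mem_top x) (mem_top y)
  by_contra hne
  refine htf _ hne ?_
  have h1 : IsOfFinOrder (⟨⁅x, y⁆, hmem⟩ : _root_.commutator G) :=
    isOfFinOrder_of_finite _
  have h2 : orderOf (⁅x, y⁆ : G) = orderOf (⟨⁅x, y⁆, hmem⟩ : _root_.commutator G) :=
    (Subgroup.orderOf_mk _ _).symm
  rw [← orderOf_pos_iff] at h1 ⊢
  omega

private lemma isCyclic_of_central (htf : Monoid.IsTorsionFree G) (N : Subgroup G)
    [IsCyclic N] (hc : N ≤ center G) [hNf : N.FiniteIndex] : IsCyclic G := by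
  have hcomm := comm_of_central htf N hc
  letI : CommGroup G := { ‹Group G› with mul_comm := hcomm }
  haveI : N.Normal := Subgroup.normal_of_comm N
  have hm : N.index ≠ 0 := hNf.index_ne_zero
  let f : G →* N := MonoidHom.codRestrict (powMonoidHom N.index) N
    (fun x => N.pow_index_mem x)
  have hinj : Function.Injective f := by
    intro x y hxy
    have hpow : x ^ N.index = y ^ N.index := congrArg Subtype.val hxy
    have h1 : (x * y⁻¹) ^ N.index = 1 := by
      rw [mul_pow, inv_pow, hpow, mul_inv_cancel]
    by_contra hne
    have hxy1 : x * y⁻¹ ≠ 1 := fun h => hne (by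
      rw [mul_inv_eq_one] at h; exact h)
    exact htf _ hxy1 (isOfFinOrder_iff_pow_eq_one.mpr
      ⟨N.index, Nat.pos_of_ne_zero hm, h1⟩)
  let e := MonoidHom.ofInjective hinj
  exact isCyclic_of_surjective e.symm e.symm.surjective

private lemma mulEquivInt (htf : Monoid.IsTorsionFree G) [IsCyclic G] [Nontrivial G] :
    Nonempty (G ≃* Multiplicative ℤ) := by
  obtain ⟨g, hg⟩ := IsCyclic.exists_generator (α := G)
  have hg1 : g ≠ 1 := by
    rintro rfl
    obtain ⟨x, hx⟩ := exists_ne (1 : G)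
    obtain ⟨k, hk⟩ := Subgroup.mem_zpowers_iff.mp (hg x)
    exact hx (by rw [← hk, one_zpow])
  have hfin : ¬ IsOfFinOrder g := htf g hg1
  have hzinj : Function.Injective fun n : ℤ => g ^ n :=
    injective_zpow_iff_not_isOfFinOrder.mpr hfin
  have hinj : Function.Injective (zpowersHom G g) := by
    intro a b hab
    have : g ^ (Multiplicative.toAdd a) = g ^ (Multiplicative.toAdd b) := hab
    exact Multiplicative.toAdd.injective (hzinj this)
  have hsurj : Function.Surjective (zpowersHom G g) := by
    intro x
    obtain ⟨k, hk⟩ := Subgroup.mem_zpowers_iff.mp (hg x)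
    exact ⟨Multiplicative.ofAdd k, hk⟩
  exact ⟨(MulEquiv.ofBijective (zpowersHom G g) ⟨hinj, hsurj⟩).symm⟩

end Aux

/-- Every torsionfree group containing a cyclic subgroup of finite index (i.e.
every torsionfree virtually cyclic group) is either trivial or infinite cyclic,
i.e. isomorphic to `ℤ`. -/
theorem torsionfree_virtually_cyclic (G : Type*) [Group G]
    (htf : Monoid.IsTorsionFree G)
    (h : ∃ H : Subgroup G, IsCyclic H ∧ H.FiniteIndex) :
    Subsingleton G ∨ Nonempty (G ≃* Multiplicative ℤ) := by
  classical
  rcases subsingleton_or_nontrivial G with hss | hnt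
  · exact Or.inl hss
  obtain ⟨H, hHc, hHf⟩ := h
  haveI := hHc
  haveI := hHf
  -- pass to the normal core, a cyclic normal subgroup of finite index
  set N : Subgroup G := H.normalCore with hNdef
  haveI hNnorm : N.Normal := H.normalCore_normal
  haveI hNfi : N.FiniteIndex := Subgroup.finiteIndex_normalCore H
  haveI : IsCyclic N := by
    have e : (N.subgroupOf H) ≃* N := Subgroup.subgroupOfEquivOfLe H.normalCore_le
    exact isCyclic_of_surjective e e.surjective
  -- a generator of N
  obtain ⟨⟨n₀, hn₀N⟩, hn₀gen⟩ := IsCyclic.exists_generator (α := N)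
  have hNgen : ∀ n ∈ N, ∃ k : ℤ, n₀ ^ k = n := by
    intro n hn
    obtain ⟨k, hk⟩ := Subgroup.mem_zpowers_iff.mp (hn₀gen ⟨n, hn⟩)
    exact ⟨k, by simpa [Subtype.ext_iff] using hk⟩
  -- N is nontrivial, since otherwise G would be finite, contradicting torsionfreeness
  have hn₀1 : n₀ ≠ 1 := by
    rintro rfl
    have hNbot : N = ⊥ := by
      rw [eq_bot_iff]
      intro n hn
      obtain ⟨k, hk⟩ := hNgen n hn
      simp only [one_zpow] at hk
      rw [← hk]; exact Subgroup.one_mem ⊥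
    have hGfin : Finite G := by
      have : (⊥ : Subgroup G).index ≠ 0 := by
        rw [← hNbot]; exact hNfi.index_ne_zero
      rw [Subgroup.index_bot] at this
      exact (Nat.card_ne_zero.mp this).2
    obtain ⟨x, hx⟩ := exists_ne (1 : G)
    exact htf x hx (isOfFinOrder_of_finite x)
  have hzinj : Function.Injective fun k : ℤ => n₀ ^ k :=
    injective_zpow_iff_not_isOfFinOrder.mpr (htf n₀ hn₀1)
  -- conjugation acts on n₀ as ±1
  have dich : ∀ g : G, g * n₀ * g⁻¹ = n₀ ∨ g * n₀ * g⁻¹ = n₀⁻¹ := by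
    intro g
    obtain ⟨k, hk⟩ := hNgen _ (hNnorm.conj_mem n₀ hn₀N g)
    obtain ⟨m, hm⟩ := hNgen _ (hNnorm.conj_mem n₀ hn₀N g⁻¹)
    have hmk : n₀ ^ (m * k) = n₀ ^ (1 : ℤ) := by
      have : g⁻¹ * (g * n₀ * g⁻¹) * g = n₀ := by group
      calc n₀ ^ (m * k) = (n₀ ^ m) ^ k := zpow_mul n₀ m k
        _ = (g⁻¹ * n₀ * g) ^ k := by rw [hm]; group
        _ = g⁻¹ * n₀ ^ k * g := by
            have := conj_zpow (i := k) (a := g⁻¹) (b := n₀)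
            simpa using this
        _ = g⁻¹ * (g * n₀ * g⁻¹) * g := by rw [hk]
        _ = n₀ := by group
        _ = n₀ ^ (1 : ℤ) := (zpow_one n₀).symm
    have hmk1 : m * k = 1 := hzinj hmk
    have : IsUnit k := IsUnit.of_mul_eq_one m (by linarith [mul_comm m k])
    rcases Int.isUnit_iff.mp this with hk1 | hk1
    · left; rw [← hk, hk1, zpow_one]
    · right; rw [← hk, hk1]; simp
  -- the sign homomorphism measuring the conjugation action on n₀
  have key : ∀ g : G,
      g * n₀ * g⁻¹ = n₀ ^ (((if g * n₀ * g⁻¹ = n₀ then 1 else -1 : ℤˣ) : ℤ)) := by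
    intro g
    by_cases hg : g * n₀ * g⁻¹ = n₀
    · rw [if_pos hg, hg]; simp
    · rw [if_neg hg, (dich g).resolve_left hg]; simp
  have hne : (n₀ : G)⁻¹ ≠ n₀ := by
    intro hcon
    have : n₀ ^ (-1 : ℤ) = n₀ ^ (1 : ℤ) := by simpa using hcon
    exact absurd (hzinj this) (by norm_num)
  let ε : G →* ℤˣ :=
    { toFun := fun g => if g * n₀ * g⁻¹ = n₀ then 1 else -1
      map_one' := by simp
      map_mul' := by
        intro a b
        have hab : (a * b) * n₀ * (a * b)⁻¹ =
            n₀ ^ ((((if a * n₀ * a⁻¹ = n₀ then 1 else -1 : ℤˣ) *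
              (if b * n₀ * b⁻¹ = n₀ then 1 else -1 : ℤˣ)) : ℤˣ) : ℤ) := by
          calc (a * b) * n₀ * (a * b)⁻¹ = a * (b * n₀ * b⁻¹) * a⁻¹ := by group
            _ = a * n₀ ^ (((if b * n₀ * b⁻¹ = n₀ then 1 else -1 : ℤˣ)) : ℤ) * a⁻¹ := by
                rw [← key b]
            _ = (a * n₀ * a⁻¹) ^ (((if b * n₀ * b⁻¹ = n₀ then 1 else -1 : ℤˣ)) : ℤ) := by
                rw [conj_zpow]
            _ = (n₀ ^ (((if a * n₀ * a⁻¹ = n₀ then 1 else -1 : ℤˣ)) : ℤ)) ^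
                  (((if b * n₀ * b⁻¹ = n₀ then 1 else -1 : ℤˣ)) : ℤ) := by rw [← key a]
            _ = n₀ ^ ((((if a * n₀ * a⁻¹ = n₀ then 1 else -1 : ℤˣ) : ℤ)) *
                  (((if b * n₀ * b⁻¹ = n₀ then 1 else -1 : ℤˣ)) : ℤ)) := by
                rw [← zpow_mul]
            _ = _ := by rw [Units.val_mul]
        rcases Int.units_eq_one_or ((if a * n₀ * a⁻¹ = n₀ then 1 else -1 : ℤˣ) *
            (if b * n₀ * b⁻¹ = n₀ then 1 else -1 : ℤˣ)) with hu | hu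
        · have hab' : a * b * n₀ * (a * b)⁻¹ = n₀ := by
            rw [hu] at hab; simpa using hab
          show (if a * b * n₀ * (a * b)⁻¹ = n₀ then (1 : ℤˣ) else -1) = _
          rw [if_pos hab', hu]
        · have hab' : a * b * n₀ * (a * b)⁻¹ = n₀⁻¹ := by
            rw [hu] at hab; simpa using hab
          show (if a * b * n₀ * (a * b)⁻¹ = n₀ then (1 : ℤˣ) else -1) = _
          rw [if_neg (by rw [hab']; exact hne), hu] }
  have hεdef : ∀ g : G, ε g = if g * n₀ * g⁻¹ = n₀ then 1 else -1 := fun g => rfl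
  have hmemker : ∀ g : G, g ∈ ε.ker ↔ g * n₀ * g⁻¹ = n₀ := by
    intro g
    rw [MonoidHom.mem_ker, hεdef]
    constructor
    · intro hg
      by_contra hcon
      rw [if_neg hcon] at hg
      exact absurd hg (by norm_num)
    · intro hg; rw [if_pos hg]
  set C : Subgroup G := ε.ker with hCdef
  haveI : Finite ℤˣ := Finite.of_surjective
    (fun b : Bool => if b then (1 : ℤˣ) else -1)
    (fun u => by rcases Int.units_eq_one_or u with hu | hu
                 exacts [⟨true, hu.symm⟩, ⟨false, hu.symm⟩])
  haveI hCfi : C.FiniteIndex := Subgroup.finiteIndex_ker ε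
  haveI hCnorm : C.Normal := MonoidHom.normal_ker ε
  have hn₀C : n₀ ∈ C := (hmemker n₀).mpr (by group)
  have hNC : N ≤ C := by
    intro n hn
    obtain ⟨k, hk⟩ := hNgen n hn
    refine (hmemker n).mpr ?_
    rw [← hk]
    have : Commute (n₀ ^ k) n₀ := (Commute.refl n₀).zpow_left k
    rw [this.eq]; group
  -- C is cyclic by the central case
  have hCcomm : ∀ c : G, c ∈ C → c * n₀ = n₀ * c := by
    intro c hc
    have hcomm := (hmemker c).mp hc
    calc c * n₀ = (c * n₀ * c⁻¹) * c := by group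
      _ = n₀ * c := by rw [hcomm]
  haveI : IsCyclic (N.subgroupOf C) := by
    have e : (N.subgroupOf C) ≃* N := Subgroup.subgroupOfEquivOfLe hNC
    exact isCyclic_of_surjective e.symm e.symm.surjective
  have hcent : N.subgroupOf C ≤ Subgroup.center C := by
    intro n hn
    rw [Subgroup.mem_center_iff]
    intro c
    have hnN : (n : G) ∈ N := hn
    obtain ⟨k, hk⟩ := hNgen _ hnN
    have hcn₀ : Commute (c : G) n₀ := hCcomm (c : G) c.2
    have hcn : Commute (c : G) (n : G) := by
      rw [← hk]; exact hcn₀.zpow_right k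
    exact Subtype.ext (by simpa using hcn.eq)
  haveI : (N.subgroupOf C).FiniteIndex := by
    constructor
    have h1 : N.relIndex C * C.index = N.index := Subgroup.relIndex_mul_index hNC
    have h2 : N.index ≠ 0 := hNfi.index_ne_zero
    have : N.relIndex C ≠ 0 := fun hz => h2 (by rw [← h1, hz, zero_mul])
    exact this
  haveI hCcyc : IsCyclic C :=
    isCyclic_of_central (fun g hg hfin => htf (g : G) (fun h => hg (Subtype.ext h))
      (isOfFinOrder_iff_pow_eq_one.mpr (by
        obtain ⟨n, hn, h⟩ := isOfFinOrder_iff_pow_eq_one.mp hfin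
        exact ⟨n, hn, by simpa using congrArg Subtype.val h⟩))) (N.subgroupOf C) hcent
  by_cases hCtop : C = ⊤
  · -- the action is trivial: G = C is cyclic, hence infinite cyclic
    haveI : IsCyclic G := by
      refine isCyclic_of_surjective C.subtype ?_
      intro x
      exact ⟨⟨x, hCtop ▸ Subgroup.mem_top x⟩, rfl⟩
    exact Or.inr (mulEquivInt htf)
  · -- otherwise we derive a contradiction
    exfalso
    have hgex : ∃ g : G, g ∉ C := by
      by_contra hcon
      push_neg at hcon
      exact hCtop (Subgroup.eq_top_iff' C |>.mpr hcon)
    obtain ⟨g, hgC⟩ := hgex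
    have hgn : g * n₀ * g⁻¹ = n₀⁻¹ :=
      (dich g).resolve_left (fun hg => hgC ((hmemker g).mpr hg))
    obtain ⟨c₀, hc₀⟩ := IsCyclic.exists_generator (α := C)
    set c : G := (c₀ : G) with hcdef
    have hCgen : ∀ x ∈ C, ∃ k : ℤ, c ^ k = x := by
      intro x hx
      obtain ⟨k, hk⟩ := Subgroup.mem_zpowers_iff.mp (hc₀ ⟨x, hx⟩)
      exact ⟨k, by simpa [Subtype.ext_iff] using hk⟩
    obtain ⟨k, hk⟩ := hCgen n₀ hn₀C
    have hc1 : c ≠ 1 := by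
      rintro hcon
      rw [hcon, one_zpow] at hk
      exact hn₀1 hk.symm
    have hk0 : k ≠ 0 := by
      rintro rfl
      rw [zpow_zero] at hk
      exact hn₀1 hk.symm
    have hcinj : Function.Injective fun j : ℤ => c ^ j :=
      injective_zpow_iff_not_isOfFinOrder.mpr (htf c hc1)
    obtain ⟨m, hm⟩ := hCgen (g * c * g⁻¹) (hCnorm.conj_mem c c₀.2 g)
    have e1 : c ^ (m * k) = c ^ (-k) := by
      calc c ^ (m * k) = (c ^ m) ^ k := zpow_mul c m k
        _ = (g * c * g⁻¹) ^ k := by rw [hm]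
        _ = g * c ^ k * g⁻¹ := conj_zpow
        _ = g * n₀ * g⁻¹ := by rw [hk]
        _ = n₀⁻¹ := hgn
        _ = (c ^ k)⁻¹ := by rw [hk]
        _ = c ^ (-k) := (zpow_neg c k).symm
    have hm1 : m = -1 := by
      have h1 : m * k = -k := hcinj e1
      have : m * k = -1 * k := by linarith
      exact mul_right_cancel₀ hk0 this
    have hg2C : g * g ∈ C := by
      refine (hmemker _).mpr ?_
      have : (g * g) * n₀ * (g * g)⁻¹ = g * (g * n₀ * g⁻¹) * g⁻¹ := by group
      rw [this, hgn]
      calc g * n₀⁻¹ * g⁻¹ = (g * n₀ * g⁻¹)⁻¹ := by group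
        _ = (n₀⁻¹)⁻¹ := by rw [hgn]
        _ = n₀ := inv_inv n₀
    obtain ⟨j, hj⟩ := hCgen (g * g) hg2C
    have e2 : c ^ (m * j) = c ^ j := by
      calc c ^ (m * j) = (c ^ m) ^ j := zpow_mul c m j
        _ = (g * c * g⁻¹) ^ j := by rw [hm]
        _ = g * c ^ j * g⁻¹ := conj_zpow
        _ = g * (g * g) * g⁻¹ := by rw [hj]
        _ = g * g := by group
        _ = c ^ j := hj.symm
    have hj0 : j = 0 := by
      have h1 : m * j = j := hcinj e2
      rw [hm1] at h1
      linarith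
    have hgg1 : g * g = 1 := by rw [← hj, hj0, zpow_zero]
    have hg1 : g ≠ 1 := fun hcon => hgC (hcon ▸ C.one_mem)
    refine htf g hg1 (isOfFinOrder_iff_pow_eq_one.mpr ⟨2, by norm_num, ?_⟩)
    rw [pow_two]; exact hgg1
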